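/- (Second-derivative wave estimate.) Let φ be C² on the cone {|x| < t−1} ⊂ ℝ^{1+2} with □φ = f, where □ = −∂_t² + ∂_1² + ∂_2². Then there is a universal constant C such that for all α, β ∈ {0,1,2}, pointwise: |∂_α∂_β φ| ≤ C ( (t−|x|)⁻¹ ( Σ_{a,γ} |∂_γ L_a φ| + Σ_γ |∂_γ φ| ) + t (t−|x|)⁻¹ |f| ). -/

import Mathlib

namespace WaveMaps

/-- A point `(t, x¹, x²)` of `ℝ^{1+2}`. -/
abbrev Pt := ℝ × ℝ × ℝ

/-- Partial derivative `∂_t`. -/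
noncomputable def dT (φ : Pt → ℝ) (p : Pt) : ℝ := fderiv ℝ φ p (1, 0, 0)
/-- Partial derivative `∂_1`. -/
noncomputable def d1 (φ : Pt → ℝ) (p : Pt) : ℝ := fderiv ℝ φ p (0, 1, 0)
/-- Partial derivative `∂_2`. -/
noncomputable def d2 (φ : Pt → ℝ) (p : Pt) : ℝ := fderiv ℝ φ p (0, 0, 1)

/-- Spatial radius `r = |x|`. -/
noncomputable def rad (p : Pt) : ℝ := Real.sqrt (p.2.1 ^ 2 + p.2.2 ^ 2)

/-- Hyperboloidal time `s = √(t² − |x|²)`. -/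
noncomputable def hs (p : Pt) : ℝ := Real.sqrt (p.1 ^ 2 - p.2.1 ^ 2 - p.2.2 ^ 2)

/-- Lorentz boost `L₁ = x¹ ∂_t + t ∂_1`. -/
noncomputable def L1 (φ : Pt → ℝ) : Pt → ℝ := fun p => p.2.1 * dT φ p + p.1 * d1 φ p
/-- Lorentz boost `L₂ = x² ∂_t + t ∂_2`. -/
noncomputable def L2 (φ : Pt → ℝ) : Pt → ℝ := fun p => p.2.2 * dT φ p + p.1 * d2 φ p
/-- Scaling vector field `L₀ = t ∂_t + x¹ ∂_1 + x² ∂_2`. -/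
noncomputable def L0 (φ : Pt → ℝ) : Pt → ℝ :=
  fun p => p.1 * dT φ p + p.2.1 * d1 φ p + p.2.2 * d2 φ p

/-- Semi-hyperboloidal derivative `∂̲₁ = (x¹/t) ∂_t + ∂_1`. -/
noncomputable def ud1 (φ : Pt → ℝ) : Pt → ℝ := fun p => p.2.1 / p.1 * dT φ p + d1 φ p
/-- Semi-hyperboloidal derivative `∂̲₂ = (x²/t) ∂_t + ∂_2`. -/
noncomputable def ud2 (φ : Pt → ℝ) : Pt → ℝ := fun p => p.2.2 / p.1 * dT φ p + d2 φ p

end WaveMaps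

namespace WaveMaps
/-- The partial derivatives `∂_0 = ∂_t, ∂_1, ∂_2` indexed by `Fin 3`. -/
noncomputable def dIdx : Fin 3 → (Pt → ℝ) → Pt → ℝ := ![dT, d1, d2]
/-- The Lorentz boosts `L₁, L₂` indexed by `Fin 2`. -/
noncomputable def LIdx : Fin 2 → (Pt → ℝ) → Pt → ℝ := ![L1, L2]
end WaveMaps


namespace WaveMaps

set_option maxHeartbeats 1000000

lemma abs_comb8 {a1 a2 a3 a4 a5 a6 a7 a8 : ℝ} :
    |a1 + a2 - a3 - a4 + a5 + a6 - a7 - a8| ≤ |a1|+|a2|+|a3|+|a4|+|a5|+|a6|+|a7|+|a8| := by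
  rw [abs_le]
  constructor <;> linarith [neg_abs_le a1, le_abs_self a1, neg_abs_le a2, le_abs_self a2,
    neg_abs_le a3, le_abs_self a3, neg_abs_le a4, le_abs_self a4, neg_abs_le a5, le_abs_self a5,
    neg_abs_le a6, le_abs_self a6, neg_abs_le a7, le_abs_self a7, neg_abs_le a8, le_abs_self a8]

lemma abs_comb3 {a1 a2 a3 : ℝ} : |a1 - a2 - a3| ≤ |a1|+|a2|+|a3| := by
  rw [abs_le]
  constructor <;> linarith [neg_abs_le a1, le_abs_self a1, neg_abs_le a2, le_abs_self a2,
    neg_abs_le a3, le_abs_self a3]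

lemma abs_comb2 {a1 a2 : ℝ} : |a1 - a2| ≤ |a1|+|a2| := by
  rw [abs_le]
  constructor <;> linarith [neg_abs_le a1, le_abs_self a1, neg_abs_le a2, le_abs_self a2]

lemma step_est {t r A G m n u w cA cG : ℝ} (ht0 : 0 < t) (hrt : r ≤ t) (hr0 : 0 ≤ r)
    (hAnn : 0 ≤ A) (hG : 0 ≤ G) (hm : 0 ≤ m) (hn : 0 ≤ n)
    (hcA : 0 ≤ cA) (hcG : 0 ≤ cG)
    (habs : t*u ≤ m + r*w + n) (hmn : m + n ≤ A)
    (hold : (t-r)*w ≤ cA*A + cG*G) : (t-r)*u ≤ (cA+1)*A + cG*G := by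
  have htr : (0:ℝ) ≤ t - r := by linarith
  have f1 : (t-r)*(t*u) ≤ (t-r)*(m + r*w + n) := mul_le_mul_of_nonneg_left habs htr
  have f2 : r*((t-r)*w) ≤ r*(cA*A + cG*G) := mul_le_mul_of_nonneg_left hold hr0
  have f3 : r*(cA*A + cG*G) ≤ t*(cA*A + cG*G) :=
    mul_le_mul_of_nonneg_right hrt (by positivity)
  have f4 : (t-r)*(m+n) ≤ t*(m+n) := by nlinarith [mul_nonneg hr0 (add_nonneg hm hn)]
  have f5 : t*(m+n) ≤ t*A := mul_le_mul_of_nonneg_left hmn ht0.le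
  have h2 : t*((t-r)*u) ≤ t*((cA+1)*A + cG*G) := by nlinarith [f1, f2, f3, f4, f5]
  exact le_of_mul_le_mul_left h2 ht0

lemma core {t x1 x2 r S00 S01 S02 S11 S12 S22 g dtv d1v d2v A : ℝ}
    (hr2 : r^2 = x1^2 + x2^2) (hr0 : 0 ≤ r)
    (hx1 : |x1| ≤ r) (hx2 : |x2| ≤ r) (hcone : r < t - 1)
    (hwave : -S00 + S11 + S22 = g)
    (hA : A = |x1*S00 + d1v + t*S01| + |dtv + x1*S01 + t*S11| + |x1*S02 + t*S12|
            + (|x2*S00 + d2v + t*S02| + |x2*S01 + t*S12| + |dtv + x2*S02 + t*S22|)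
            + (|dtv| + |d1v| + |d2v|)) :
    ((t-r)*|S00| ≤ 5*A + 5*(t*|g|)) ∧ ((t-r)*|S01| ≤ 5*A + 5*(t*|g|)) ∧
    ((t-r)*|S02| ≤ 5*A + 5*(t*|g|)) ∧ ((t-r)*|S11| ≤ 5*A + 5*(t*|g|)) ∧
    ((t-r)*|S12| ≤ 5*A + 5*(t*|g|)) ∧ ((t-r)*|S22| ≤ 5*A + 5*(t*|g|)) := by
  have ht0 : (0:ℝ) < t := by linarith
  have hrt : r ≤ t := by linarith
  have htr : (0:ℝ) < t - r := by linarith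
  have hAnn : 0 ≤ A := by rw [hA]; positivity
  have hG : 0 ≤ t*|g| := by positivity
  have nn1 := abs_nonneg (x1*S00 + d1v + t*S01)
  have nn2 := abs_nonneg (dtv + x1*S01 + t*S11)
  have nn3 := abs_nonneg (x1*S02 + t*S12)
  have nn4 := abs_nonneg (x2*S00 + d2v + t*S02)
  have nn5 := abs_nonneg (x2*S01 + t*S12)
  have nn6 := abs_nonneg (dtv + x2*S02 + t*S22)
  have nn7 := abs_nonneg dtv
  have nn8 := abs_nonneg d1v
  have nn9 := abs_nonneg d2v
  have key00 : (t^2 - r^2)*S00 = t*(dtv + x1*S01 + t*S11) + t*(dtv + x2*S02 + t*S22)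
      - x1*(x1*S00 + d1v + t*S01) - x2*(x2*S00 + d2v + t*S02)
      + x1*d1v + x2*d2v - 2*t*dtv - t^2*g := by
    linear_combination (-(t^2))*hwave - S00*hr2
  have E : |(t^2-r^2)*S00| ≤ t*|dtv + x1*S01 + t*S11| + t*|dtv + x2*S02 + t*S22|
      + t*|x1*S00 + d1v + t*S01| + t*|x2*S00 + d2v + t*S02|
      + t*|d1v| + t*|d2v| + 2*t*|dtv| + t^2*|g| := by
    rw [key00]
    refine abs_comb8.trans ?_
    have g1 : |t*(dtv + x1*S01 + t*S11)| = t*|dtv + x1*S01 + t*S11| := by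
      rw [abs_mul, abs_of_pos ht0]
    have g2 : |t*(dtv + x2*S02 + t*S22)| = t*|dtv + x2*S02 + t*S22| := by
      rw [abs_mul, abs_of_pos ht0]
    have g3 : |x1*(x1*S00 + d1v + t*S01)| ≤ t*|x1*S00 + d1v + t*S01| := by
      rw [abs_mul]; exact mul_le_mul_of_nonneg_right (hx1.trans hrt) (abs_nonneg _)
    have g4 : |x2*(x2*S00 + d2v + t*S02)| ≤ t*|x2*S00 + d2v + t*S02| := by
      rw [abs_mul]; exact mul_le_mul_of_nonneg_right (hx2.trans hrt) (abs_nonneg _)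
    have g5 : |x1*d1v| ≤ t*|d1v| := by
      rw [abs_mul]; exact mul_le_mul_of_nonneg_right (hx1.trans hrt) (abs_nonneg _)
    have g6 : |x2*d2v| ≤ t*|d2v| := by
      rw [abs_mul]; exact mul_le_mul_of_nonneg_right (hx2.trans hrt) (abs_nonneg _)
    have g7 : |2*t*dtv| = 2*t*|dtv| := by
      rw [abs_mul, abs_of_pos (by linarith : (0:ℝ) < 2*t)]
    have g8 : |t^2*g| = t^2*|g| := by
      rw [abs_mul, abs_of_pos (by positivity : (0:ℝ) < t^2)]
    linarith
  have E2 : (t^2 - r^2)*|S00| = |(t^2-r^2)*S00| := by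
    rw [abs_mul, abs_of_pos (by nlinarith : (0:ℝ) < t^2 - r^2)]
  have sumA : |dtv + x1*S01 + t*S11| + |dtv + x2*S02 + t*S22| + |x1*S00 + d1v + t*S01|
      + |x2*S00 + d2v + t*S02| + |d1v| + |d2v| + 2*|dtv| ≤ 3*A := by
    rw [hA]; linarith
  have h2 : t*((t-r)*|S00|) ≤ t*(3*A + t*|g|) := by
    have c1 : t*((t-r)*|S00|) ≤ (t^2-r^2)*|S00| := by
      nlinarith [mul_nonneg (mul_nonneg hr0 htr.le) (abs_nonneg S00)]
    have c2 := mul_le_mul_of_nonneg_left sumA ht0.le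
    have c3 : t*|dtv + x1*S01 + t*S11| + t*|dtv + x2*S02 + t*S22|
        + t*|x1*S00 + d1v + t*S01| + t*|x2*S00 + d2v + t*S02|
        + t*|d1v| + t*|d2v| + 2*t*|dtv| + t^2*|g| ≤ t*(3*A + t*|g|) := by
      have : (0:ℝ) ≤ t^2*|g| := by positivity
      nlinarith [c2]
    linarith [c1, E, c3, E2.le, E2.ge]
  have b00 : (t-r)*|S00| ≤ 3*A + 1*(t*|g|) := by
    have := le_of_mul_le_mul_left h2 ht0; linarith
  have habs01 : t*|S01| ≤ |x1*S00 + d1v + t*S01| + r*|S00| + |d1v| := by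
    have k : t*S01 = (x1*S00 + d1v + t*S01) - x1*S00 - d1v := by ring
    have h3 : |x1*S00| ≤ r*|S00| := by
      rw [abs_mul]; exact mul_le_mul_of_nonneg_right hx1 (abs_nonneg _)
    calc t*|S01| = |t*S01| := by rw [abs_mul, abs_of_pos ht0]
      _ = |(x1*S00 + d1v + t*S01) - x1*S00 - d1v| := by rw [← k]
      _ ≤ |x1*S00 + d1v + t*S01| + |x1*S00| + |d1v| := abs_comb3
      _ ≤ _ := by linarith
  have b01 : (t-r)*|S01| ≤ 4*A + 1*(t*|g|) := by
    have := step_est ht0 hrt hr0 hAnn hG nn1 nn8 (by norm_num) (by norm_num) habs01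
      (by rw [hA]; linarith) b00
    linarith
  have habs02 : t*|S02| ≤ |x2*S00 + d2v + t*S02| + r*|S00| + |d2v| := by
    have k : t*S02 = (x2*S00 + d2v + t*S02) - x2*S00 - d2v := by ring
    have h3 : |x2*S00| ≤ r*|S00| := by
      rw [abs_mul]; exact mul_le_mul_of_nonneg_right hx2 (abs_nonneg _)
    calc t*|S02| = |t*S02| := by rw [abs_mul, abs_of_pos ht0]
      _ = |(x2*S00 + d2v + t*S02) - x2*S00 - d2v| := by rw [← k]
      _ ≤ |x2*S00 + d2v + t*S02| + |x2*S00| + |d2v| := abs_comb3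
      _ ≤ _ := by linarith
  have b02 : (t-r)*|S02| ≤ 4*A + 1*(t*|g|) := by
    have := step_est ht0 hrt hr0 hAnn hG nn4 nn9 (by norm_num) (by norm_num) habs02
      (by rw [hA]; linarith) b00
    linarith
  have habs11 : t*|S11| ≤ |dtv + x1*S01 + t*S11| + r*|S01| + |dtv| := by
    have k : t*S11 = (dtv + x1*S01 + t*S11) - x1*S01 - dtv := by ring
    have h3 : |x1*S01| ≤ r*|S01| := by
      rw [abs_mul]; exact mul_le_mul_of_nonneg_right hx1 (abs_nonneg _)
    calc t*|S11| = |t*S11| := by rw [abs_mul, abs_of_pos ht0]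
      _ = |(dtv + x1*S01 + t*S11) - x1*S01 - dtv| := by rw [← k]
      _ ≤ |dtv + x1*S01 + t*S11| + |x1*S01| + |dtv| := abs_comb3
      _ ≤ _ := by linarith
  have b11 : (t-r)*|S11| ≤ 5*A + 1*(t*|g|) := by
    have := step_est ht0 hrt hr0 hAnn hG nn2 nn7 (by norm_num) (by norm_num) habs11
      (by rw [hA]; linarith) b01
    linarith
  have habs12 : t*|S12| ≤ |x2*S01 + t*S12| + r*|S01| + 0 := by
    have k : t*S12 = (x2*S01 + t*S12) - x2*S01 := by ring
    have h3 : |x2*S01| ≤ r*|S01| := by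
      rw [abs_mul]; exact mul_le_mul_of_nonneg_right hx2 (abs_nonneg _)
    calc t*|S12| = |t*S12| := by rw [abs_mul, abs_of_pos ht0]
      _ = |(x2*S01 + t*S12) - x2*S01| := by rw [← k]
      _ ≤ |x2*S01 + t*S12| + |x2*S01| := abs_comb2
      _ ≤ _ := by linarith
  have b12 : (t-r)*|S12| ≤ 5*A + 1*(t*|g|) := by
    have := step_est ht0 hrt hr0 hAnn hG nn5 le_rfl (by norm_num) (by norm_num) habs12
      (by rw [hA]; linarith) b01
    linarith
  have habs22 : t*|S22| ≤ |dtv + x2*S02 + t*S22| + r*|S02| + |dtv| := by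
    have k : t*S22 = (dtv + x2*S02 + t*S22) - x2*S02 - dtv := by ring
    have h3 : |x2*S02| ≤ r*|S02| := by
      rw [abs_mul]; exact mul_le_mul_of_nonneg_right hx2 (abs_nonneg _)
    calc t*|S22| = |t*S22| := by rw [abs_mul, abs_of_pos ht0]
      _ = |(dtv + x2*S02 + t*S22) - x2*S02 - dtv| := by rw [← k]
      _ ≤ |dtv + x2*S02 + t*S22| + |x2*S02| + |dtv| := abs_comb3
      _ ≤ _ := by linarith
  have b22 : (t-r)*|S22| ≤ 5*A + 1*(t*|g|) := by
    have := step_est ht0 hrt hr0 hAnn hG nn6 nn7 (by norm_num) (by norm_num) habs22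
      (by rw [hA]; linarith) b02
    linarith
  exact ⟨by linarith, by linarith, by linarith, by linarith, by linarith, by linarith⟩

lemma hasF_eval {φ : Pt → ℝ} (hφ : ContDiff ℝ 2 φ) (p : Pt) (w : Pt) :
    HasFDerivAt (fun q => fderiv ℝ φ q w) ((fderiv ℝ (fderiv ℝ φ) p).flip w) p := by
  have hC1 : ContDiff ℝ 1 (fderiv ℝ φ) := hφ.fderiv_right (le_refl 2)
  have hB : HasFDerivAt (fderiv ℝ φ) (fderiv ℝ (fderiv ℝ φ) p) p :=
    ((hC1.differentiable one_ne_zero) p).hasFDerivAt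
  exact (ContinuousLinearMap.apply ℝ ℝ w).hasFDerivAt.comp p hB

lemma deriv_eval {φ : Pt → ℝ} (hφ : ContDiff ℝ 2 φ) (p : Pt) (v w : Pt) :
    fderiv ℝ (fun q => fderiv ℝ φ q w) p v = fderiv ℝ (fderiv ℝ φ) p v w := by
  rw [(hasF_eval hφ p w).fderiv]; rfl

lemma symm_eval {φ : Pt → ℝ} (hφ : ContDiff ℝ 2 φ) (p : Pt) (v w : Pt) :
    fderiv ℝ (fderiv ℝ φ) p v w = fderiv ℝ (fderiv ℝ φ) p w v := by
  have hC1 : ContDiff ℝ 1 (fderiv ℝ φ) := hφ.fderiv_right (le_refl 2)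
  exact second_derivative_symmetric
    (fun y => ((hφ.differentiable (by norm_num)) y).hasFDerivAt)
    (((hC1.differentiable one_ne_zero) p).hasFDerivAt) v w

lemma fderiv_L1 {φ : Pt → ℝ} (hφ : ContDiff ℝ 2 φ) (p v : Pt) :
    fderiv ℝ (L1 φ) p v = v.2.1 * dT φ p + p.2.1 * fderiv ℝ (fderiv ℝ φ) p v (1,0,0)
      + v.1 * d1 φ p + p.1 * fderiv ℝ (fderiv ℝ φ) p v (0,1,0) := by
  have h0 := hasF_eval hφ p (1,0,0)
  have h1 := hasF_eval hφ p (0,1,0)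
  have hx : HasFDerivAt (fun q : Pt => q.2.1)
      ((ContinuousLinearMap.fst ℝ ℝ ℝ).comp (ContinuousLinearMap.snd ℝ ℝ (ℝ×ℝ))) p :=
    ((ContinuousLinearMap.fst ℝ ℝ ℝ).comp (ContinuousLinearMap.snd ℝ ℝ (ℝ×ℝ))).hasFDerivAt
  have ht : HasFDerivAt (fun q : Pt => q.1) (ContinuousLinearMap.fst ℝ ℝ (ℝ×ℝ)) p :=
    (ContinuousLinearMap.fst ℝ ℝ (ℝ×ℝ)).hasFDerivAt
  have h : HasFDerivAt (L1 φ) _ p := (hx.mul h0).add (ht.mul h1)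
  rw [h.fderiv]
  simp [dT, d1, ContinuousLinearMap.flip_apply, mul_comm]
  ring

lemma fderiv_L2 {φ : Pt → ℝ} (hφ : ContDiff ℝ 2 φ) (p v : Pt) :
    fderiv ℝ (L2 φ) p v = v.2.2 * dT φ p + p.2.2 * fderiv ℝ (fderiv ℝ φ) p v (1,0,0)
      + v.1 * d2 φ p + p.1 * fderiv ℝ (fderiv ℝ φ) p v (0,0,1) := by
  have h0 := hasF_eval hφ p (1,0,0)
  have h2 := hasF_eval hφ p (0,0,1)
  have hx : HasFDerivAt (fun q : Pt => q.2.2)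
      ((ContinuousLinearMap.snd ℝ ℝ ℝ).comp (ContinuousLinearMap.snd ℝ ℝ (ℝ×ℝ))) p :=
    ((ContinuousLinearMap.snd ℝ ℝ ℝ).comp (ContinuousLinearMap.snd ℝ ℝ (ℝ×ℝ))).hasFDerivAt
  have ht : HasFDerivAt (fun q : Pt => q.1) (ContinuousLinearMap.fst ℝ ℝ (ℝ×ℝ)) p :=
    (ContinuousLinearMap.fst ℝ ℝ (ℝ×ℝ)).hasFDerivAt
  have h : HasFDerivAt (L2 φ) _ p := (hx.mul h0).add (ht.mul h2)
  rw [h.fderiv]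
  simp [dT, d2, ContinuousLinearMap.flip_apply, mul_comm]
  ring

end WaveMaps

open WaveMaps in
/-- Second-derivative wave estimate: if `□φ = f` in the cone `|x| < t − 1`, there is a
universal constant `C` with
`|∂_α∂_βφ| ≤ C((t−|x|)⁻¹(Σ_{a,γ}|∂_γL_aφ| + Σ_γ|∂_γφ|) + t(t−|x|)⁻¹|f|)`. -/
theorem stmt_17 :
    ∃ C > (0 : ℝ), ∀ φ f : Pt → ℝ, ContDiff ℝ 2 φ →
      (∀ p : Pt, rad p < p.1 - 1 →
        -(dT (dT φ) p) + d1 (d1 φ) p + d2 (d2 φ) p = f p) →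
      ∀ p : Pt, rad p < p.1 - 1 → ∀ α β : Fin 3,
        |dIdx α (dIdx β φ) p| ≤
          C * ((p.1 - rad p)⁻¹ *
              ((∑ a : Fin 2, ∑ γ : Fin 3, |dIdx γ (LIdx a φ) p|) +
                ∑ γ : Fin 3, |dIdx γ φ p|) +
            p.1 * (p.1 - rad p)⁻¹ * |f p|) := by
  refine ⟨5, by norm_num, ?_⟩
  intro φ f hφ hwaveAll p hp α β
  have hr2 : rad p ^ 2 = p.2.1^2 + p.2.2^2 := Real.sq_sqrt (by positivity)
  have hr0 : 0 ≤ rad p := Real.sqrt_nonneg _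
  have hx1 : |p.2.1| ≤ rad p := by
    rw [← Real.sqrt_sq_eq_abs]
    exact Real.sqrt_le_sqrt (by nlinarith [sq_nonneg p.2.2])
  have hx2 : |p.2.2| ≤ rad p := by
    rw [← Real.sqrt_sq_eq_abs]
    exact Real.sqrt_le_sqrt (by nlinarith [sq_nonneg p.2.1])
  have c00 : dT (dT φ) p = fderiv ℝ (fderiv ℝ φ) p (1,0,0) (1,0,0) := deriv_eval hφ p _ _
  have c01 : dT (d1 φ) p = fderiv ℝ (fderiv ℝ φ) p (1,0,0) (0,1,0) := deriv_eval hφ p _ _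
  have c02 : dT (d2 φ) p = fderiv ℝ (fderiv ℝ φ) p (1,0,0) (0,0,1) := deriv_eval hφ p _ _
  have c10 : d1 (dT φ) p = fderiv ℝ (fderiv ℝ φ) p (1,0,0) (0,1,0) :=
    (deriv_eval hφ p _ _).trans (symm_eval hφ p _ _)
  have c11 : d1 (d1 φ) p = fderiv ℝ (fderiv ℝ φ) p (0,1,0) (0,1,0) := deriv_eval hφ p _ _
  have c12 : d1 (d2 φ) p = fderiv ℝ (fderiv ℝ φ) p (0,1,0) (0,0,1) := deriv_eval hφ p _ _
  have c20 : d2 (dT φ) p = fderiv ℝ (fderiv ℝ φ) p (1,0,0) (0,0,1) :=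
    (deriv_eval hφ p _ _).trans (symm_eval hφ p _ _)
  have c21 : d2 (d1 φ) p = fderiv ℝ (fderiv ℝ φ) p (0,1,0) (0,0,1) :=
    (deriv_eval hφ p _ _).trans (symm_eval hφ p _ _)
  have c22 : d2 (d2 φ) p = fderiv ℝ (fderiv ℝ φ) p (0,0,1) (0,0,1) := deriv_eval hφ p _ _
  have hwave' : -(fderiv ℝ (fderiv ℝ φ) p (1,0,0) (1,0,0))
      + fderiv ℝ (fderiv ℝ φ) p (0,1,0) (0,1,0)
      + fderiv ℝ (fderiv ℝ φ) p (0,0,1) (0,0,1) = f p := by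
    rw [← c00, ← c11, ← c22]; exact hwaveAll p hp
  have L1t : dT (L1 φ) p = p.2.1 * fderiv ℝ (fderiv ℝ φ) p (1,0,0) (1,0,0) + d1 φ p
      + p.1 * fderiv ℝ (fderiv ℝ φ) p (1,0,0) (0,1,0) := by
    rw [show dT (L1 φ) p = fderiv ℝ (L1 φ) p (1,0,0) from rfl, fderiv_L1 hφ p (1,0,0)]
    norm_num
  have L1x : d1 (L1 φ) p = dT φ p + p.2.1 * fderiv ℝ (fderiv ℝ φ) p (1,0,0) (0,1,0)
      + p.1 * fderiv ℝ (fderiv ℝ φ) p (0,1,0) (0,1,0) := by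
    rw [show d1 (L1 φ) p = fderiv ℝ (L1 φ) p (0,1,0) from rfl, fderiv_L1 hφ p (0,1,0),
      symm_eval hφ p (0,1,0) (1,0,0)]
    norm_num
  have L1y : d2 (L1 φ) p = p.2.1 * fderiv ℝ (fderiv ℝ φ) p (1,0,0) (0,0,1)
      + p.1 * fderiv ℝ (fderiv ℝ φ) p (0,1,0) (0,0,1) := by
    rw [show d2 (L1 φ) p = fderiv ℝ (L1 φ) p (0,0,1) from rfl, fderiv_L1 hφ p (0,0,1),
      symm_eval hφ p (0,0,1) (1,0,0), symm_eval hφ p (0,0,1) (0,1,0)]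
    norm_num
  have L2t : dT (L2 φ) p = p.2.2 * fderiv ℝ (fderiv ℝ φ) p (1,0,0) (1,0,0) + d2 φ p
      + p.1 * fderiv ℝ (fderiv ℝ φ) p (1,0,0) (0,0,1) := by
    rw [show dT (L2 φ) p = fderiv ℝ (L2 φ) p (1,0,0) from rfl, fderiv_L2 hφ p (1,0,0)]
    norm_num
  have L2x : d1 (L2 φ) p = p.2.2 * fderiv ℝ (fderiv ℝ φ) p (1,0,0) (0,1,0)
      + p.1 * fderiv ℝ (fderiv ℝ φ) p (0,1,0) (0,0,1) := by
    rw [show d1 (L2 φ) p = fderiv ℝ (L2 φ) p (0,1,0) from rfl, fderiv_L2 hφ p (0,1,0),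
      symm_eval hφ p (0,1,0) (1,0,0)]
    norm_num
  have L2y : d2 (L2 φ) p = dT φ p + p.2.2 * fderiv ℝ (fderiv ℝ φ) p (1,0,0) (0,0,1)
      + p.1 * fderiv ℝ (fderiv ℝ φ) p (0,0,1) (0,0,1) := by
    rw [show d2 (L2 φ) p = fderiv ℝ (L2 φ) p (0,0,1) from rfl, fderiv_L2 hφ p (0,0,1),
      symm_eval hφ p (0,0,1) (1,0,0)]
    norm_num
  have hsum : (∑ a : Fin 2, ∑ γ : Fin 3, |dIdx γ (LIdx a φ) p|) + ∑ γ : Fin 3, |dIdx γ φ p|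
      = |p.2.1 * fderiv ℝ (fderiv ℝ φ) p (1,0,0) (1,0,0) + d1 φ p
          + p.1 * fderiv ℝ (fderiv ℝ φ) p (1,0,0) (0,1,0)|
      + |dT φ p + p.2.1 * fderiv ℝ (fderiv ℝ φ) p (1,0,0) (0,1,0)
          + p.1 * fderiv ℝ (fderiv ℝ φ) p (0,1,0) (0,1,0)|
      + |p.2.1 * fderiv ℝ (fderiv ℝ φ) p (1,0,0) (0,0,1)
          + p.1 * fderiv ℝ (fderiv ℝ φ) p (0,1,0) (0,0,1)|
      + (|p.2.2 * fderiv ℝ (fderiv ℝ φ) p (1,0,0) (1,0,0) + d2 φ p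
          + p.1 * fderiv ℝ (fderiv ℝ φ) p (1,0,0) (0,0,1)|
        + |p.2.2 * fderiv ℝ (fderiv ℝ φ) p (1,0,0) (0,1,0)
          + p.1 * fderiv ℝ (fderiv ℝ φ) p (0,1,0) (0,0,1)|
        + |dT φ p + p.2.2 * fderiv ℝ (fderiv ℝ φ) p (1,0,0) (0,0,1)
          + p.1 * fderiv ℝ (fderiv ℝ φ) p (0,0,1) (0,0,1)|)
      + (|dT φ p| + |d1 φ p| + |d2 φ p|) := by
    simp only [Fin.sum_univ_two, Fin.sum_univ_three, dIdx, LIdx,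
      Matrix.cons_val_zero, Matrix.cons_val_one, Matrix.head_cons,
      Matrix.cons_val_two, Matrix.tail_cons]
    rw [L1t, L1x, L1y, L2t, L2x, L2y]
  obtain ⟨b00, b01, b02, b11, b12, b22⟩ := core hr2 hr0 hx1 hx2 hp hwave' hsum
  have final : ∀ S A : ℝ, (p.1 - rad p)*|S| ≤ 5*A + 5*(p.1*|f p|) →
      |S| ≤ 5*((p.1 - rad p)⁻¹*A + p.1*(p.1 - rad p)⁻¹*|f p|) := by
    intro S A h
    have htr : (0:ℝ) < p.1 - rad p := by linarith
    have h5 : |S| = (p.1 - rad p)⁻¹ * ((p.1 - rad p)*|S|) := by field_simp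
    rw [h5]
    calc (p.1 - rad p)⁻¹ * ((p.1 - rad p)*|S|)
        ≤ (p.1 - rad p)⁻¹ * (5*A + 5*(p.1*|f p|)) :=
          mul_le_mul_of_nonneg_left h (by positivity)
      _ = 5*((p.1 - rad p)⁻¹*A + p.1*(p.1 - rad p)⁻¹*|f p|) := by ring
  fin_cases α <;> fin_cases β <;>
    simp only [dIdx, show (⟨2, by omega⟩ : Fin 3) = (2 : Fin 3) from rfl,
      Matrix.cons_val_zero, Matrix.cons_val_one, Matrix.head_cons,
      Matrix.cons_val_two, Matrix.tail_cons, Fin.mk_zero, Fin.mk_one]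
  · rw [c00]; exact final _ _ b00
  · rw [c01]; exact final _ _ b01
  · rw [c02]; exact final _ _ b02
  · rw [c10]; exact final _ _ b01
  · rw [c11]; exact final _ _ b11
  · rw [c12]; exact final _ _ b12
  · rw [c20]; exact final _ _ b02
  · rw [c21]; exact final _ _ b12
  · rw [c22]; exact final _ _ b22
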